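/- Let n, k : ℕ and m : ℕ with 2m ≤ nk, and let i : ℕ satisfy 1 ≤ i ≤ m + 1. Then the kernel of D on the image D^{i-1}(Q_n(k,m)) is exactly the space of semi-invariants of weight m − i + 1: { J : ∃ I ∈ Q_n(k,m), J = D^{i-1}(I) and D(J) = 0 } = S_n(k, m − i + 1). In particular, every semi-invariant of degree k and weight m − i + 1 lies in D^{i-1}(Q_n(k,m)). -/

import Mathlib

open MvPolynomial

/-- The operator `D(I) = Σ_{i=1}^{n} i · a_{i-1} · ∂I/∂a_i`. -/
noncomputable def Dop (n : ℕ) :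
    MvPolynomial (Fin (n+1)) ℚ →ₗ[ℚ] MvPolynomial (Fin (n+1)) ℚ :=
  ∑ i : Fin n, ((i : ℚ) + 1) •
    ((LinearMap.mulLeft ℚ (X i.castSucc)).comp (pderiv i.succ).toLinearMap)

/-- The operator `Δ(I) = Σ_{i=0}^{n-1} (n-i) · a_{i+1} · ∂I/∂a_i`. -/
noncomputable def Δop (n : ℕ) :
    MvPolynomial (Fin (n+1)) ℚ →ₗ[ℚ] MvPolynomial (Fin (n+1)) ℚ :=
  ∑ i : Fin n, ((n : ℚ) - (i : ℚ)) •
    ((LinearMap.mulLeft ℚ (X i.succ)).comp (pderiv i.castSucc).toLinearMap)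

/-- `Q_n(k,m)`: span of monomials of degree `k` and weight `m`. -/
noncomputable def Qspace (n k m : ℕ) : Submodule ℚ (MvPolynomial (Fin (n+1)) ℚ) :=
  Submodule.span ℚ { p | ∃ ν : Fin (n+1) →₀ ℕ,
    (∑ i : Fin (n+1), ν i) = k ∧ (∑ i : Fin (n+1), (i : ℕ) * ν i) = m ∧ p = monomial ν (1 : ℚ) }

/-- `S_n(k,m)`: semi-invariants of degree `k` and weight `m`. -/
noncomputable def Sspace (n k m : ℕ) : Submodule ℚ (MvPolynomial (Fin (n+1)) ℚ) :=
  Qspace n k m ⊓ LinearMap.ker (Dop n)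

/-- `p(k,n,m)`: number of partitions of `m` in a `k × n` rectangle. -/
def pRect (k n m : ℕ) : ℕ :=
  (Finset.univ.filter
    (fun P : Nat.Partition m => Multiset.card P.parts ≤ k ∧ ∀ x ∈ P.parts, x ≤ n)).card

/-- Coefficient embedding `ℚ[a] → ℚ[z][a]`. -/
noncomputable def ιmap (n : ℕ) :
    MvPolynomial (Fin (n+1)) ℚ →+* MvPolynomial (Fin (n+1)) (Polynomial ℚ) :=
  MvPolynomial.map (Polynomial.C)

/-- The shear substitution `a_i ↦ a_i' = Σ_{j=0}^{i} C(i,j) a_{i-j} z^j`. -/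
noncomputable def φmap (n : ℕ) :
    MvPolynomial (Fin (n+1)) ℚ →ₐ[ℚ] MvPolynomial (Fin (n+1)) (Polynomial ℚ) :=
  aeval (fun i : Fin (n+1) => ∑ j ∈ Finset.range ((i : ℕ) + 1),
    (C ((Nat.choose (i : ℕ) j : Polynomial ℚ) * Polynomial.X ^ j)) *
      X (⟨(i : ℕ) - j, Nat.lt_of_le_of_lt (Nat.sub_le _ _) i.isLt⟩ : Fin (n+1)))

/-- The vertical shear substitution `a_i ↦ a_i'' = Σ_{j=0}^{n-i} C(n-i,j) a_{i+j} z^j`. -/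
noncomputable def ψmap (n : ℕ) :
    MvPolynomial (Fin (n+1)) ℚ →ₐ[ℚ] MvPolynomial (Fin (n+1)) (Polynomial ℚ) :=
  aeval (fun i : Fin (n+1) => ∑ j ∈ (Finset.range (n - (i : ℕ) + 1)).attach,
    (C ((Nat.choose (n - (i : ℕ)) j.1 : Polynomial ℚ) * Polynomial.X ^ j.1)) *
      X (⟨(i : ℕ) + j.1, by
        have h1 := Finset.mem_range.mp j.2
        have h2 := i.isLt
        omega⟩ : Fin (n+1)))

/-- The weighted total degree of `I`: max of `Σ_i i·ν_i` over monomials of `I`. -/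
def wdeg (n : ℕ) (I : MvPolynomial (Fin (n+1)) ℚ) : ℕ :=
  I.support.sup (fun ν => ∑ i : Fin (n+1), (i : ℕ) * ν i)

-- ===== auxiliary development =====

section Aux
open Finsupp

lemma Derivation.sum_apply'' {R A M : Type*} [CommSemiring R] [CommSemiring A] [Algebra R A]
    [AddCommMonoid M] [Module R M] [Module A M] {ι : Type*} (s : Finset ι)
    (D : ι → Derivation R A M) (a : A) : (∑ i ∈ s, D i) a = ∑ i ∈ s, D i a := by
  induction s using Finset.cons_induction with
  | empty => simp
  | cons i s hi ih => simp [Finset.sum_cons, ih]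

noncomputable def Dder (n : ℕ) :
    Derivation ℚ (MvPolynomial (Fin (n+1)) ℚ) (MvPolynomial (Fin (n+1)) ℚ) :=
  ∑ i : Fin n, (((i : ℚ) + 1) • X i.castSucc : MvPolynomial (Fin (n+1)) ℚ) •
    (pderiv i.succ : Derivation ℚ (MvPolynomial (Fin (n+1)) ℚ) (MvPolynomial (Fin (n+1)) ℚ))

noncomputable def Δder (n : ℕ) :
    Derivation ℚ (MvPolynomial (Fin (n+1)) ℚ) (MvPolynomial (Fin (n+1)) ℚ) :=
  ∑ i : Fin n, (((n : ℚ) - (i : ℚ)) • X i.succ : MvPolynomial (Fin (n+1)) ℚ) •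
    (pderiv i.castSucc : Derivation ℚ (MvPolynomial (Fin (n+1)) ℚ) (MvPolynomial (Fin (n+1)) ℚ))

noncomputable def Eder (n : ℕ) :
    Derivation ℚ (MvPolynomial (Fin (n+1)) ℚ) (MvPolynomial (Fin (n+1)) ℚ) :=
  ∑ i : Fin (n+1), (((n : ℚ) - 2 * (i : ℚ)) • X i : MvPolynomial (Fin (n+1)) ℚ) •
    (pderiv i : Derivation ℚ (MvPolynomial (Fin (n+1)) ℚ) (MvPolynomial (Fin (n+1)) ℚ))

lemma Dder_apply (n : ℕ) (p : MvPolynomial (Fin (n+1)) ℚ) : Dder n p = Dop n p := by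
  simp [Dder, Dop, Derivation.sum_apply'', LinearMap.sum_apply, smul_mul_assoc, mul_smul_comm,
    smul_smul, mul_comm]

lemma Δder_apply (n : ℕ) (p : MvPolynomial (Fin (n+1)) ℚ) : Δder n p = Δop n p := by
  simp [Δder, Δop, Derivation.sum_apply'', LinearMap.sum_apply, smul_mul_assoc, mul_smul_comm,
    smul_smul, mul_comm]

lemma Dder_X0 (n : ℕ) : Dder n (X 0) = 0 := by
  simp only [Dder, Derivation.sum_apply'', Derivation.smul_apply]
  refine Finset.sum_eq_zero fun i _ => ?_
  rw [pderiv_X_of_ne (Fin.succ_ne_zero i).symm, smul_zero]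

lemma Dder_Xsucc (n : ℕ) (j : Fin n) :
    Dder n (X j.succ) = ((j : ℚ) + 1) • X j.castSucc := by
  simp only [Dder, Derivation.sum_apply'', Derivation.smul_apply]
  rw [Finset.sum_eq_single j]
  · rw [pderiv_X_self, smul_eq_mul, mul_one]
  · intro i _ hij
    rw [pderiv_X_of_ne (by simpa [Fin.succ_inj] using hij.symm), smul_zero]
  · intro h; exact absurd (Finset.mem_univ j) h

lemma Δder_Xlast (n : ℕ) : Δder n (X (Fin.last n)) = 0 := by
  simp only [Δder, Derivation.sum_apply'', Derivation.smul_apply]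
  refine Finset.sum_eq_zero fun i _ => ?_
  rw [pderiv_X_of_ne (Fin.castSucc_lt_last i).ne', smul_zero]

lemma Δder_Xcast (n : ℕ) (j : Fin n) :
    Δder n (X j.castSucc) = ((n : ℚ) - (j : ℚ)) • X j.succ := by
  simp only [Δder, Derivation.sum_apply'', Derivation.smul_apply]
  rw [Finset.sum_eq_single j]
  · rw [pderiv_X_self, smul_eq_mul, mul_one]
  · intro i _ hij
    rw [pderiv_X_of_ne (by simpa [Fin.castSucc_inj] using hij.symm), smul_zero]
  · intro h; exact absurd (Finset.mem_univ j) h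

lemma Eder_X (n : ℕ) (j : Fin (n+1)) :
    Eder n (X j) = ((n : ℚ) - 2 * (j : ℚ)) • X j := by
  simp only [Eder, Derivation.sum_apply'', Derivation.smul_apply]
  rw [Finset.sum_eq_single j]
  · rw [pderiv_X_self, smul_eq_mul, mul_one]
  · intro i _ hij
    rw [pderiv_X_of_ne hij.symm, smul_zero]
  · intro h; exact absurd (Finset.mem_univ j) h

lemma comm_eq (n : ℕ) : ⁅Dder n, Δder n⁆ = Eder n := by
  apply MvPolynomial.derivation_ext
  intro j
  rw [Derivation.commutator_apply, Eder_X]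
  rcases Fin.eq_castSucc_or_eq_last j with ⟨j'', rfl⟩ | rfl
  · rw [Δder_Xcast, Derivation.map_smul, Dder_Xsucc]
    rcases Fin.eq_zero_or_eq_succ j''.castSucc with h0 | ⟨j', hj'⟩
    · rw [h0, Dder_X0, map_zero, sub_zero, smul_smul]
      have h1 : (j'' : ℚ) = 0 := by
        have : ((j''.castSucc : ℕ) : ℚ) = 0 := by rw [h0]; simp
        simpa using this
      simp only [Fin.val_zero, Nat.cast_zero]
      rw [h1]; ring_nf
    · rw [hj', Dder_Xsucc, Derivation.map_smul, Δder_Xcast, smul_smul, smul_smul, ← sub_smul,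
        ← hj']
      have hv : (j' : ℚ) + 1 = (j'' : ℚ) := by
        have := congrArg (fun x : Fin (n+1) => ((x : ℕ) : ℚ)) hj'
        simp only [Fin.coe_castSucc, Fin.val_succ] at this
        push_cast at this
        linarith
      have h2 : ((j''.castSucc : ℕ) : ℚ) = (j'' : ℚ) := by simp
      congr 1
      rw [h2, ← hv]; ring
  · rw [Δder_Xlast, map_zero, zero_sub]
    rcases Fin.eq_zero_or_eq_succ (Fin.last n) with h0 | ⟨j', hj'⟩
    · have hn : n = 0 := by
        have := congrArg (fun x : Fin (n+1) => (x : ℕ)) h0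
        simpa using this
      subst hn
      rw [h0, Dder_X0, map_zero, neg_zero]
      simp
    · rw [hj', Dder_Xsucc, Derivation.map_smul, Δder_Xcast, smul_smul, ← neg_smul, ← hj']
      have hv : (j' : ℚ) + 1 = (n : ℚ) := by
        have := congrArg (fun x : Fin (n+1) => ((x : ℕ) : ℚ)) hj'
        simp only [Fin.val_last, Fin.val_succ] at this
        push_cast at this
        linarith
      have hlast : ((Fin.last n : Fin (n+1)) : ℚ) = (n : ℚ) := by simp
      congr 1
      rw [hlast, ← hv]; ring

lemma shift_sum {n : ℕ} (f : Fin (n+1) → ℕ) (ν : Fin (n+1) →₀ ℕ) (a b : Fin (n+1))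
    (hb : 1 ≤ ν b) :
    (∑ j : Fin (n+1), f j * ((Finsupp.single a 1 + (ν - Finsupp.single b 1) : Fin (n+1) →₀ ℕ) j)) + f b
      = (∑ j : Fin (n+1), f j * ν j) + f a := by
  have hpt : ∀ j : Fin (n+1), f j * ((Finsupp.single a 1 + (ν - Finsupp.single b 1) : Fin (n+1) →₀ ℕ) j)
      + f j * (Finsupp.single b 1 : Fin (n+1) →₀ ℕ) j
      = f j * ν j + f j * (Finsupp.single a 1 : Fin (n+1) →₀ ℕ) j := by
    intro j
    have h2 : (Finsupp.single b 1 : Fin (n+1) →₀ ℕ) j ≤ ν j := by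
      rcases eq_or_ne b j with rfl | hne
      · simpa using hb
      · simp [Finsupp.single_apply, hne]
    rw [Finsupp.add_apply, Finsupp.tsub_apply]
    set s := (Finsupp.single b 1 : Fin (n+1) →₀ ℕ) j
    set x := (Finsupp.single a 1 : Fin (n+1) →₀ ℕ) j
    have : ν j - s + s = ν j := Nat.sub_add_cancel h2
    calc f j * (x + (ν j - s)) + f j * s = f j * (x + (ν j - s + s)) := by ring
      _ = f j * ν j + f j * x := by rw [this]; ring
  have hsum := Finset.sum_congr rfl (fun j (_ : j ∈ Finset.univ) => hpt j)
  rw [Finset.sum_add_distrib, Finset.sum_add_distrib] at hsum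
  have hb' : ∑ j : Fin (n+1), f j * (Finsupp.single b 1 : Fin (n+1) →₀ ℕ) j = f b := by
    simp [Finsupp.single_apply, mul_ite]
  have ha' : ∑ j : Fin (n+1), f j * (Finsupp.single a 1 : Fin (n+1) →₀ ℕ) j = f a := by
    simp [Finsupp.single_apply, mul_ite]
  rw [hb', ha'] at hsum
  exact hsum

lemma monomial_mem_Qspace {n k m : ℕ} {ν : Fin (n+1) →₀ ℕ}
    (hd : (∑ i : Fin (n+1), ν i) = k) (hw : (∑ i : Fin (n+1), (i : ℕ) * ν i) = m) (c : ℚ) :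
    monomial ν c ∈ Qspace n k m := by
  have : monomial ν c = c • monomial ν (1:ℚ) := by simp [smul_monomial]
  rw [this]
  exact Submodule.smul_mem _ _ (Submodule.subset_span ⟨ν, hd, hw, rfl⟩)

lemma Dop_monomial (n : ℕ) (ν : Fin (n+1) →₀ ℕ) :
    Dop n (monomial ν (1:ℚ)) = ∑ i : Fin n, (((i : ℚ) + 1) * (ν i.succ : ℚ)) •
      monomial (Finsupp.single i.castSucc 1 + (ν - Finsupp.single i.succ 1)) (1:ℚ) := by
  simp only [Dop, LinearMap.sum_apply, LinearMap.smul_apply, LinearMap.comp_apply,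
    Derivation.coeFn_coe, pderiv_monomial, LinearMap.mulLeft_apply, one_mul]
  refine Finset.sum_congr rfl fun i _ => ?_
  rw [X, monomial_mul, one_mul, mul_smul]
  simp [smul_monomial]

lemma Δop_monomial (n : ℕ) (ν : Fin (n+1) →₀ ℕ) :
    Δop n (monomial ν (1:ℚ)) = ∑ i : Fin n, (((n : ℚ) - (i : ℚ)) * (ν i.castSucc : ℚ)) •
      monomial (Finsupp.single i.succ 1 + (ν - Finsupp.single i.castSucc 1)) (1:ℚ) := by
  simp only [Δop, LinearMap.sum_apply, LinearMap.smul_apply, LinearMap.comp_apply,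
    Derivation.coeFn_coe, pderiv_monomial, LinearMap.mulLeft_apply, one_mul]
  refine Finset.sum_congr rfl fun i _ => ?_
  rw [X, monomial_mul, one_mul, mul_smul]
  simp [smul_monomial]

lemma Dop_mem {n k m : ℕ} {p : MvPolynomial (Fin (n+1)) ℚ} (hp : p ∈ Qspace n k m) :
    Dop n p ∈ Qspace n k (m - 1) := by
  have hle : Qspace n k m ≤ Submodule.comap (Dop n) (Qspace n k (m-1)) := by
    rw [Qspace, Submodule.span_le]
    rintro p ⟨ν, hd, hw, rfl⟩
    simp only [Submodule.mem_comap, SetLike.mem_coe]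
    rw [Dop_monomial]
    refine Submodule.sum_mem _ fun i _ => ?_
    rcases Nat.eq_zero_or_pos (ν i.succ) with h0 | h1
    · simp [h0]
    · refine Submodule.smul_mem _ _ ?_
      have hdeg := shift_sum (fun _ => 1) ν i.castSucc i.succ h1
      have hwt := shift_sum (fun j => (j : ℕ)) ν i.castSucc i.succ h1
      simp only [one_mul, Fin.val_succ, Fin.coe_castSucc] at hdeg hwt
      have hmge : (i : ℕ) + 1 ≤ m := by
        have := Finset.single_le_sum (f := fun j : Fin (n+1) => (j : ℕ) * ν j)
          (fun j _ => Nat.zero_le _) (Finset.mem_univ i.succ)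
        simp only [Fin.val_succ] at this
        calc (i:ℕ) + 1 = ((i:ℕ)+1) * 1 := by ring
          _ ≤ ((i:ℕ)+1) * ν i.succ := Nat.mul_le_mul_left _ h1
          _ ≤ _ := this.trans hw.le
      exact monomial_mem_Qspace (by omega) (by omega) _
  exact hle hp

lemma Δop_mem {n k m : ℕ} {p : MvPolynomial (Fin (n+1)) ℚ} (hp : p ∈ Qspace n k m) :
    Δop n p ∈ Qspace n k (m + 1) := by
  have hle : Qspace n k m ≤ Submodule.comap (Δop n) (Qspace n k (m+1)) := by
    rw [Qspace, Submodule.span_le]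
    rintro p ⟨ν, hd, hw, rfl⟩
    simp only [Submodule.mem_comap, SetLike.mem_coe]
    rw [Δop_monomial]
    refine Submodule.sum_mem _ fun i _ => ?_
    rcases Nat.eq_zero_or_pos (ν i.castSucc) with h0 | h1
    · simp [h0]
    · refine Submodule.smul_mem _ _ ?_
      have hdeg := shift_sum (fun _ => 1) ν i.succ i.castSucc h1
      have hwt := shift_sum (fun j => (j : ℕ)) ν i.succ i.castSucc h1
      simp only [one_mul, Fin.val_succ, Fin.coe_castSucc] at hdeg hwt
      exact monomial_mem_Qspace (by omega) (by omega) _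
  exact hle hp

lemma Dop_pow_mem {n k m : ℕ} {p : MvPolynomial (Fin (n+1)) ℚ} (hp : p ∈ Qspace n k m)
    (r : ℕ) : (Dop n ^ r) p ∈ Qspace n k (m - r) := by
  induction r with
  | zero => simpa using hp
  | succ r ih =>
      have : (Dop n ^ (r+1)) p = Dop n ((Dop n ^ r) p) := by
        rw [pow_succ']; rfl
      rw [this]
      have := Dop_mem ih
      have he : m - r - 1 = m - (r+1) := by omega
      rwa [he] at this

lemma Δop_pow_mem {n k m : ℕ} {p : MvPolynomial (Fin (n+1)) ℚ} (hp : p ∈ Qspace n k m)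
    (r : ℕ) : (Δop n ^ r) p ∈ Qspace n k (m + r) := by
  induction r with
  | zero => simpa using hp
  | succ r ih =>
      have : (Δop n ^ (r+1)) p = Δop n ((Δop n ^ r) p) := by
        rw [pow_succ']; rfl
      rw [this]
      exact Δop_mem ih

lemma X_mul_pderiv_monomial {n : ℕ} (i : Fin (n+1)) (ν : Fin (n+1) →₀ ℕ) :
    (X i : MvPolynomial (Fin (n+1)) ℚ) * pderiv i (monomial ν (1:ℚ))
      = (ν i : ℚ) • monomial ν 1 := by
  rw [pderiv_monomial, one_mul]
  rcases Nat.eq_zero_or_pos (ν i) with h0 | h1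
  · simp [h0]
  · rw [X, monomial_mul, one_mul]
    have hid : Finsupp.single i 1 + (ν - Finsupp.single i 1) = ν := by
      ext j
      rw [Finsupp.add_apply, Finsupp.tsub_apply]
      rcases eq_or_ne i j with rfl | hne
      · simp only [Finsupp.single_eq_same]
        omega
      · simp [Finsupp.single_apply, hne]
    rw [hid]
    simp [smul_monomial]

lemma Eder_monomial {n k m : ℕ} {ν : Fin (n+1) →₀ ℕ}
    (hd : (∑ i : Fin (n+1), ν i) = k) (hw : (∑ i : Fin (n+1), (i : ℕ) * ν i) = m) :
    Eder n (monomial ν (1:ℚ)) = (((n:ℚ) * k) - 2 * m) • monomial ν 1 := by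
  simp only [Eder, Derivation.sum_apply'', Derivation.smul_apply]
  have hterm : ∀ i : Fin (n+1),
      ((((n : ℚ) - 2 * (i : ℚ)) • X i : MvPolynomial (Fin (n+1)) ℚ)) • pderiv i (monomial ν (1:ℚ))
        = ((((n : ℚ) - 2 * (i : ℚ)) * (ν i : ℚ))) • monomial ν (1:ℚ) := by
    intro i
    rw [smul_eq_mul, smul_mul_assoc, _root_.X_mul_pderiv_monomial, smul_smul]
  rw [Finset.sum_congr rfl (fun i _ => hterm i), ← Finset.sum_smul]
  congr 1
  have : ∑ i : Fin (n+1), ((n : ℚ) - 2 * (i : ℚ)) * (ν i : ℚ)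
      = (n : ℚ) * (∑ i : Fin (n+1), (ν i : ℚ)) - 2 * (∑ i : Fin (n+1), (i : ℚ) * (ν i : ℚ)) := by
    rw [Finset.mul_sum, Finset.mul_sum, ← Finset.sum_sub_distrib]
    exact Finset.sum_congr rfl fun i _ => by ring
  rw [this]
  have h1 : (∑ i : Fin (n+1), (ν i : ℚ)) = (k : ℚ) := by
    rw [← hd]; push_cast; rfl
  have h2 : (∑ i : Fin (n+1), (i : ℚ) * (ν i : ℚ)) = (m : ℚ) := by
    rw [← hw]; push_cast; rfl
  rw [h1, h2]

lemma Eder_eigen {n k m : ℕ} {p : MvPolynomial (Fin (n+1)) ℚ} (hp : p ∈ Qspace n k m) :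
    Eder n p = (((n:ℚ) * k) - 2 * m) • p := by
  set c : ℚ := ((n:ℚ) * k) - 2 * m with hc
  set T : MvPolynomial (Fin (n+1)) ℚ →ₗ[ℚ] MvPolynomial (Fin (n+1)) ℚ :=
    (Eder n : MvPolynomial (Fin (n+1)) ℚ →ₗ[ℚ] MvPolynomial (Fin (n+1)) ℚ) - c • LinearMap.id
    with hT
  have hle : Qspace n k m ≤ LinearMap.ker T := by
    rw [Qspace, Submodule.span_le]
    rintro q ⟨ν, hd, hw, rfl⟩
    simp only [SetLike.mem_coe, LinearMap.mem_ker, hT, LinearMap.sub_apply,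
      LinearMap.smul_apply, LinearMap.id_apply, Derivation.coeFn_coe]
    rw [Eder_monomial hd hw, sub_eq_zero]
  have := hle hp
  rw [LinearMap.mem_ker, hT, LinearMap.sub_apply, LinearMap.smul_apply, LinearMap.id_apply,
    Derivation.coeFn_coe, sub_eq_zero] at this
  exact this

lemma comm_apply {n k w : ℕ} {p : MvPolynomial (Fin (n+1)) ℚ} (hp : p ∈ Qspace n k w) :
    Dop n (Δop n p) = Δop n (Dop n p) + (((n:ℚ) * k) - 2 * w) • p := by
  have h := congrFun (congrArg (fun D : Derivation ℚ (MvPolynomial (Fin (n+1)) ℚ)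
    (MvPolynomial (Fin (n+1)) ℚ) => (D : MvPolynomial (Fin (n+1)) ℚ → MvPolynomial (Fin (n+1)) ℚ))
    (comm_eq n)) p
  simp only [Derivation.commutator_apply] at h
  rw [Dder_apply, Δder_apply, Δder_apply, Dder_apply, Eder_eigen hp, sub_eq_iff_eq_add] at h
  rw [h]; exact add_comm _ _

end Aux

lemma D_Δpow {n k m' : ℕ} {J : MvPolynomial (Fin (n+1)) ℚ} (hJ : J ∈ Qspace n k m')
    (h0 : Dop n J = 0) (r : ℕ) :
    Dop n ((Δop n ^ (r+1)) J)
      = (∑ s ∈ Finset.range (r+1), (((n:ℚ) * k - 2 * m') - 2 * s)) • (Δop n ^ r) J := by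
  induction r with
  | zero =>
      have h1 : (Δop n ^ 1) J = Δop n J := by rw [pow_one]
      rw [h1, comm_apply hJ, h0, map_zero, zero_add]
      simp
  | succ r ih =>
      have hq : (Δop n ^ (r+1)) J ∈ Qspace n k (m' + (r+1)) := Δop_pow_mem hJ (r+1)
      have h1 : (Δop n ^ (r+2)) J = Δop n ((Δop n ^ (r+1)) J) := by
        rw [pow_succ']; rfl
      rw [h1, comm_apply hq, ih, map_smul]
      have h2 : Δop n ((Δop n ^ r) J) = (Δop n ^ (r+1)) J := by
        rw [pow_succ']; rfl
      rw [h2, ← add_smul]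
      congr 1
      conv_rhs => rw [Finset.sum_range_succ]
      congr 1
      push_cast
      ring

lemma Dpow_Δpow {n k m' : ℕ} {J : MvPolynomial (Fin (n+1)) ℚ} (hJ : J ∈ Qspace n k m')
    (h0 : Dop n J = 0) (r : ℕ) :
    (Dop n ^ r) ((Δop n ^ r) J)
      = (∏ s ∈ Finset.range r, ∑ t ∈ Finset.range (s+1),
          (((n:ℚ) * k - 2 * m') - 2 * t)) • J := by
  induction r with
  | zero => simp
  | succ r ih =>
      have h1 : (Dop n ^ (r+1)) ((Δop n ^ (r+1)) J)
          = (Dop n ^ r) (Dop n ((Δop n ^ (r+1)) J)) := by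
        rw [pow_succ]; rfl
      rw [h1, D_Δpow hJ h0 r, map_smul, ih, smul_smul, Finset.prod_range_succ, mul_comm]

/-- the kernel of `D` on `D^{i-1}(Q_n(k,m))` is exactly `S_n(k, m-i+1)`. -/
theorem ker_D_on_image (n k m : ℕ) (h : 2 * m ≤ n * k) (i : ℕ) (hi1 : 1 ≤ i)
    (hi2 : i ≤ m + 1) :
    {J : MvPolynomial (Fin (n+1)) ℚ |
        ∃ I ∈ Qspace n k m, J = (Dop n ^ (i - 1)) I ∧ Dop n J = 0}
      = ↑(Sspace n k (m + 1 - i)) := by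
  set r := i - 1 with hr
  have hrm : r ≤ m := by omega
  have hm' : m - r = m + 1 - i := by omega
  ext J
  simp only [Set.mem_setOf_eq, SetLike.mem_coe, Sspace, Submodule.mem_inf, LinearMap.mem_ker]
  constructor
  · rintro ⟨I, hI, rfl, hD⟩
    refine ⟨?_, hD⟩
    have := Dop_pow_mem hI r
    rwa [hm'] at this
  · rintro ⟨hQ, hD0⟩
    set lam : ℚ := (n:ℚ) * k - 2 * (m + 1 - i : ℕ) with hlam
    set c : ℚ := ∏ s ∈ Finset.range r, ∑ t ∈ Finset.range (s+1), (lam - 2 * t) with hc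
    have hmr : ((m + 1 - i : ℕ) : ℚ) = (m : ℚ) - r := by
      rw [← hm']
      push_cast [hrm]
      ring
    have hlamge : (2 * r : ℚ) ≤ lam := by
      have hnk : (2 * m : ℚ) ≤ (n : ℚ) * k := by exact_mod_cast h
      rw [hlam, hmr]
      linarith
    have hcpos : 0 < c := by
      refine Finset.prod_pos fun s hs => Finset.sum_pos (fun t ht => ?_) ⟨0, by simp⟩
      have hs' := Finset.mem_range.mp hs
      have ht' := Finset.mem_range.mp ht
      have htr : (t : ℚ) + 1 ≤ (r : ℚ) := by exact_mod_cast (by omega : t + 1 ≤ r)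
      linarith
    have key := Dpow_Δpow hQ hD0 r
    refine ⟨c⁻¹ • (Δop n ^ r) J, ?_, ?_, hD0⟩
    · refine Submodule.smul_mem _ _ ?_
      have := Δop_pow_mem hQ r
      have he : m + 1 - i + r = m := by omega
      rwa [he] at this
    · have hPc : (∏ s ∈ Finset.range r, ∑ t ∈ Finset.range (s+1),
          ((n:ℚ) * k - 2 * ((m + 1 - i : ℕ) : ℚ) - 2 * t)) = c := rfl
      rw [map_smul, key, hPc, smul_smul, inv_mul_cancel₀ hcpos.ne', one_smul]
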